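/- Let n ≥ 1 and x : Fin n → ℤ. Define sequences val_j : Fin n → ℤ and prev_j : Fin n → ℤ (where prev_j i is the index of the predecessor, or -1 denoting nil) by: val_0 i = x i, prev_0 i = i - 1 (so prev_0 0 = -1); and for each iteration, val_{j+1} i = val_j i + (if prev_j i ≥ 0 then val_j (prev_j i) else 0), prev_{j+1} i = (if prev_j i ≥ 0 then prev_j (prev_j i) else -1). Then for all j and all i, val_j i = ∑_{k = max 0 (i - 2^j + 1)}^{i} x k, and prev_j i = i - 2^j if i - 2^j ≥ 0, else -1. -/

import Mathlib

lemma icc_eq_ioc (a b : ℤ) : Finset.Icc (max 0 (a + 1)) b = Finset.Ioc (max (-1) a) b := by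
  ext k; simp [Finset.mem_Icc, Finset.mem_Ioc]; omega

lemma sum_ioc_split (x : ℤ → ℤ) {a b c : ℤ} (hab : a ≤ b) (hbc : b ≤ c) :
    (∑ k ∈ Finset.Ioc a b, x k) + ∑ k ∈ Finset.Ioc b c, x k = ∑ k ∈ Finset.Ioc a c, x k := by
  rw [← Finset.Ioc_union_Ioc_eq_Ioc hab hbc, Finset.sum_union]
  rw [Finset.disjoint_left]
  intro k hk hk'
  simp only [Finset.mem_Ioc] at hk hk'
  omega

/-- Hillis–Steele prefix sum: after iteration `j`, position `i` holds the sum of the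
last `2^j` values up to `i`, and its predecessor pointer is `i - 2^j` (or `-1` for nil). -/
theorem prefix_sum_iteration_invariant
    (n : ℕ) (hn : 1 ≤ n) (x : ℤ → ℤ)
    (val prev : ℕ → ℤ → ℤ)
    (hval0 : ∀ i : ℤ, 0 ≤ i → i < n → val 0 i = x i)
    (hprev0 : ∀ i : ℤ, 0 ≤ i → i < n → prev 0 i = i - 1)
    (hvalS : ∀ (j : ℕ) (i : ℤ), 0 ≤ i → i < n →
      val (j + 1) i = val j i + (if 0 ≤ prev j i then val j (prev j i) else 0))
    (hprevS : ∀ (j : ℕ) (i : ℤ), 0 ≤ i → i < n →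
      prev (j + 1) i = (if 0 ≤ prev j i then prev j (prev j i) else -1)) :
    ∀ (j : ℕ) (i : ℤ), 0 ≤ i → i < n →
      (val j i = ∑ k ∈ Finset.Icc (max 0 (i - 2 ^ j + 1)) i, x k) ∧
      (prev j i = if 0 ≤ i - 2 ^ j then i - 2 ^ j else -1) := by
  intro j
  induction j with
  | zero =>
    intro i hi hin
    constructor
    · rw [hval0 i hi hin]
      have : max 0 (i - 2 ^ 0 + 1) = i := by omega
      rw [this, Finset.Icc_self, Finset.sum_singleton]
    · rw [hprev0 i hi hin]
      split <;> omega
  | succ j ih =>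
    intro i hi hin
    obtain ⟨hv, hp⟩ := ih i hi hin
    rw [hvalS j i hi hin, hprevS j i hi hin, hp]
    by_cases hge : 0 ≤ i - 2 ^ j
    · have h1 : (0:ℤ) < 2 ^ j := by positivity
      have hi' : i - 2 ^ j < n := by omega
      obtain ⟨hv', hp'⟩ := ih (i - 2 ^ j) hge hi'
      simp only [if_pos hge]
      rw [hv, hv', hp']
      have e1 : i - 2 ^ j - 2 ^ j = i - 2 ^ (j + 1) := by ring
      rw [e1]
      refine ⟨?_, rfl⟩
      rw [icc_eq_ioc, icc_eq_ioc, icc_eq_ioc]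
      have e2 : max (-1) (i - 2 ^ j) = i - 2 ^ j := by omega
      rw [e2, add_comm]
      exact sum_ioc_split x (by omega) (by omega)
    · have h2 : i - 2 ^ (j + 1) < 0 := by
        have : (2:ℤ) ^ j ≤ 2 ^ (j + 1) := by
          apply pow_le_pow_right₀ <;> omega
        omega
      simp only [if_neg hge]
      norm_num
      constructor
      · rw [hv]
        have : (0:ℤ) ⊔ (i - 2 ^ (j + 1) + 1) = 0 ⊔ (i - 2 ^ j + 1) := by omega
        rw [this]
      · intro h; omega
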